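/- If φ_1, …, φ_K ∈ H satisfy the normalization ⟨φ_k, T_{μμ} φ_l⟩ = δ_{kl} for all 1 ≤ k, l ≤ K, then IMSE_K[φ_1, …, φ_K] = (1/G)·Σ_{g=1}^G ‖τ_g^c‖² − Σ_{k=1}^K ‖T_{μτ}^* φ_k‖², and the infimum defining IMSE_K[φ_1, …, φ_K] is attained at the choice ψ_k = T_{μτ}^* φ_k for k = 1, …, K. (This identity, proved in the paper's proof of Lemma 3.1 and Corollary 3.1, shows the optimal second-stage predictors are ψ_k = T_{μτ}^* φ_k.) -/
import Mathlib


open scoped InnerProductSpace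

/-- for a T_{μμ}-orthonormal family φ_1,…,φ_K, the IMSE equals the total
variance minus Σ_k ‖T_{μτ}^* φ_k‖², and the infimum is attained at ψ_k = T_{μτ}^* φ_k. -/
theorem transfer_IMSE_formula_and_attainment
    {H : Type*} [NormedAddCommGroup H] [InnerProductSpace ℝ H] [CompleteSpace H]
    [TopologicalSpace.SeparableSpace H]
    (G K : ℕ) (hG : 0 < G) (hK : 0 < K)
    (μ τ μc τc : Fin G → H)
    (hμc : ∀ g, μc g = μ g - (G : ℝ)⁻¹ • ∑ g', μ g')
    (hτc : ∀ g, τc g = τ g - (G : ℝ)⁻¹ • ∑ g', τ g')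
    (Tμμ Tμτstar : H →L[ℝ] H)
    (hTμμ : ∀ h : H, Tμμ h = (G : ℝ)⁻¹ • ∑ g, ⟪μc g, h⟫_ℝ • μc g)
    (hTμτstar : ∀ h : H, Tμτstar h = (G : ℝ)⁻¹ • ∑ g, ⟪μc g, h⟫_ℝ • τc g)
    (IMSE : (Fin K → H) → ℝ)
    (hIMSE : ∀ φ : Fin K → H, IMSE φ =
      ⨅ ψ : Fin K → H, (G : ℝ)⁻¹ * ∑ g, ‖τc g - ∑ k, ⟪μc g, φ k⟫_ℝ • ψ k‖ ^ 2)
    (φ : Fin K → H)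
    (hnorm : ∀ k l, ⟪φ k, Tμμ (φ l)⟫_ℝ = if k = l then (1 : ℝ) else 0) :
    IMSE φ = (G : ℝ)⁻¹ * ∑ g, ‖τc g‖ ^ 2 - ∑ k, ‖Tμτstar (φ k)‖ ^ 2 ∧
    (G : ℝ)⁻¹ * ∑ g, ‖τc g - ∑ k, ⟪μc g, φ k⟫_ℝ • Tμτstar (φ k)‖ ^ 2 = IMSE φ := by
  set a : Fin G → Fin K → ℝ := fun g k => ⟪μc g, φ k⟫_ℝ with ha_def
  set b : Fin K → H := fun k => Tμτstar (φ k) with hb_def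
  set C : ℝ := (G : ℝ)⁻¹ * ∑ g, ‖τc g‖ ^ 2 with hC_def
  set F : (Fin K → H) → ℝ :=
    fun ψ => (G : ℝ)⁻¹ * ∑ g, ‖τc g - ∑ k, a g k • ψ k‖ ^ 2 with hF_def
  -- inner product with b k
  have hbinner : ∀ k (x : H), ⟪b k, x⟫_ℝ = (G : ℝ)⁻¹ * ∑ g, a g k * ⟪τc g, x⟫_ℝ := by
    intro k x
    simp [hb_def, hTμτstar (φ k), sum_inner, real_inner_smul_left, ha_def]
  -- the normalization in explicit form
  have hanorm : ∀ k l, (G : ℝ)⁻¹ * ∑ g, a g k * a g l = if k = l then (1 : ℝ) else 0 := by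
    intro k l
    rw [← hnorm k l, hTμμ (φ l), real_inner_smul_right, inner_sum]
    congr 1
    refine Finset.sum_congr rfl fun g _ => ?_
    rw [real_inner_smul_right]
    simp only [ha_def]
    rw [real_inner_comm (φ k) (μc g)]
    ring
  -- key identity
  have key : ∀ ψ : Fin K → H,
      F ψ = (C - ∑ k, ‖b k‖ ^ 2) + ∑ k, ‖ψ k - b k‖ ^ 2 := by
    intro ψ
    have expand : ∀ g, ‖τc g - ∑ k, a g k • ψ k‖ ^ 2 =
        ‖τc g‖ ^ 2 - 2 * (∑ k, a g k * ⟪τc g, ψ k⟫_ℝ)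
          + ∑ k, ∑ l, (a g k * a g l) * ⟪ψ k, ψ l⟫_ℝ := by
      intro g
      have e1 : ⟪τc g, ∑ k, a g k • ψ k⟫_ℝ = ∑ k, a g k * ⟪τc g, ψ k⟫_ℝ := by
        rw [inner_sum]
        exact Finset.sum_congr rfl fun k _ => by rw [real_inner_smul_right]
      have e2 : ‖∑ k, a g k • ψ k‖ ^ 2
          = ∑ k, ∑ l, (a g k * a g l) * ⟪ψ k, ψ l⟫_ℝ := by
        rw [← real_inner_self_eq_norm_sq, sum_inner]
        refine Finset.sum_congr rfl fun k _ => ?_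
        rw [real_inner_smul_left, inner_sum, Finset.mul_sum]
        refine Finset.sum_congr rfl fun l _ => ?_
        rw [real_inner_smul_right]; ring
      rw [norm_sub_sq_real, e1, e2]
    have h1 : (G : ℝ)⁻¹ * ∑ g, ∑ k, a g k * ⟪τc g, ψ k⟫_ℝ = ∑ k, ⟪b k, ψ k⟫_ℝ := by
      rw [Finset.sum_comm, Finset.mul_sum]
      exact Finset.sum_congr rfl fun k _ => (hbinner k (ψ k)).symm
    have h2 : (G : ℝ)⁻¹ * ∑ g, ∑ k, ∑ l, (a g k * a g l) * ⟪ψ k, ψ l⟫_ℝ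
        = ∑ k, ‖ψ k‖ ^ 2 := by
      rw [Finset.sum_comm, Finset.mul_sum]
      refine Finset.sum_congr rfl fun k _ => ?_
      rw [Finset.sum_comm, Finset.mul_sum]
      have : ∀ l, (G : ℝ)⁻¹ * ∑ g, (a g k * a g l) * ⟪ψ k, ψ l⟫_ℝ
          = (if k = l then (1:ℝ) else 0) * ⟪ψ k, ψ l⟫_ℝ := by
        intro l
        rw [← hanorm k l]
        conv_rhs => rw [mul_assoc, Finset.sum_mul]
      rw [Finset.sum_congr rfl fun l _ => this l]
      simp [real_inner_self_eq_norm_sq]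
    have hFexp : F ψ = C - 2 * ∑ k, ⟪b k, ψ k⟫_ℝ + ∑ k, ‖ψ k‖ ^ 2 := by
      have hstep : F ψ = (G : ℝ)⁻¹ * ((∑ g, ‖τc g‖ ^ 2)
          - 2 * (∑ g, ∑ k, a g k * ⟪τc g, ψ k⟫_ℝ)
          + ∑ g, ∑ k, ∑ l, (a g k * a g l) * ⟪ψ k, ψ l⟫_ℝ) := by
        rw [hF_def]
        simp only [expand]
        rw [Finset.sum_add_distrib, Finset.sum_sub_distrib, ← Finset.mul_sum]
      rw [hstep, hC_def]
      linear_combination (-2 : ℝ) * h1 + h2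
    have hsub : ∑ k, ‖ψ k - b k‖ ^ 2
        = ∑ k, ‖ψ k‖ ^ 2 - 2 * ∑ k, ⟪b k, ψ k⟫_ℝ + ∑ k, ‖b k‖ ^ 2 := by
      have e : ∀ k, ‖ψ k - b k‖ ^ 2
          = ‖ψ k‖ ^ 2 - 2 * ⟪b k, ψ k⟫_ℝ + ‖b k‖ ^ 2 := fun k => by
        rw [norm_sub_sq_real, real_inner_comm (ψ k) (b k)]
      simp only [e]
      rw [Finset.sum_add_distrib, Finset.sum_sub_distrib, ← Finset.mul_sum]
    rw [hFexp, hsub]; ring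
  -- attainment value
  have hFb : F b = C - ∑ k, ‖b k‖ ^ 2 := by
    rw [key b]; simp
  have hlow : ∀ ψ, C - ∑ k, ‖b k‖ ^ 2 ≤ F ψ := by
    intro ψ
    rw [key ψ]
    have : (0:ℝ) ≤ ∑ k, ‖ψ k - b k‖ ^ 2 :=
      Finset.sum_nonneg fun k _ => sq_nonneg _
    linarith
  have hinf : IMSE φ = C - ∑ k, ‖b k‖ ^ 2 := by
    rw [hIMSE φ]
    have hF : (⨅ ψ : Fin K → H, (G : ℝ)⁻¹ * ∑ g, ‖τc g - ∑ k, ⟪μc g, φ k⟫_ℝ • ψ k‖ ^ 2)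
        = ⨅ ψ, F ψ := rfl
    rw [hF]
    refine le_antisymm ?_ (le_ciInf hlow)
    calc ⨅ ψ, F ψ ≤ F b := ciInf_le ⟨C - ∑ k, ‖b k‖ ^ 2, fun x ⟨ψ, hψ⟩ => hψ ▸ hlow ψ⟩ b
      _ = _ := hFb
  refine ⟨hinf, ?_⟩
  rw [hinf, ← hFb]
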